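/- If a QBF φ = Π.ψ in prenex conjunctive normal form is satisfiable under an assignment A (i.e., φ[A] is satisfiable as a QBF), and A is a QCDCL assignment (decisions assigned in prefix order, other literals forced by unit/pure literal detection), then adding the cube C = ⋀_{l∈A} l disjunctively to the matrix preserves satisfiability: Π.ψ is satisfiable if and only if Π.(ψ ∨ C) is satisfiable. -/

import Mathlib

/-- Variables are natural numbers. -/
abbrev Var := ℕ

/-- A literal is a variable together with a polarity. -/
abbrev Lit := Var × Bool

/-- Negation of a literal. -/
def Lit.negate (l : Lit) : Lit := (l.1, !l.2)

/-- A clause is a finite set of literals (interpreted disjunctively). -/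
abbrev Clause := Finset Lit

/-- A cube is a finite set of literals (interpreted conjunctively). -/
abbrev Cube := Finset Lit

/-- A CNF is a finite set of clauses. -/
abbrev Cnf := Finset Clause

/-- An assignment is a finite set of literals. -/
abbrev Assignment := Finset Lit

/-- An assignment contains no complementary pair of literals. -/
def Assignment.consistent (A : Assignment) : Prop := ∀ l ∈ A, Lit.negate l ∉ A

/-- A total assignment satisfies a literal. -/
def litSat (σ : Var → Bool) (l : Lit) : Prop := σ l.1 = l.2

/-- A total assignment satisfies a clause. -/
def clauseSat (σ : Var → Bool) (C : Clause) : Prop := ∃ l ∈ C, litSat σ l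

/-- A total assignment satisfies a CNF (is a propositional model). -/
def cnfSat (σ : Var → Bool) (ψ : Cnf) : Prop := ∀ C ∈ ψ, clauseSat σ C

/-- A total assignment satisfies a cube. -/
def cubeSat (σ : Var → Bool) (D : Cube) : Prop := ∀ l ∈ D, litSat σ l

/-- Restriction of a clause by an assignment: delete falsified literals. -/
def Clause.restrict (C : Clause) (A : Assignment) : Clause :=
  C.filter (fun l => Lit.negate l ∉ A)

/-- Restriction ψ[A] of a CNF by an assignment: remove satisfied clauses and
delete falsified literals from the remaining clauses. -/
def Cnf.restrict (ψ : Cnf) (A : Assignment) : Cnf :=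
  (ψ.filter (fun C => ∀ l ∈ A, l ∉ C)).image (fun C => Clause.restrict C A)

/-- Quantifiers. -/
inductive Quant | ex | all
deriving DecidableEq

/-- A quantifier prefix: a list of quantified variables (outermost first). -/
abbrev QPrefix := List (Quant × Var)

/-- Restriction of a prefix by an assignment: remove assigned variables. -/
def QPrefix.restrict (pre : QPrefix) (A : Assignment) : QPrefix :=
  pre.filter (fun q => q.2 ∉ A.image Prod.fst)

/-- Satisfiability of the PCNF `pre.ψ`, defined recursively over the prefix:
an existential variable needs one satisfiable branch, a universal variable
both; a quantifier-free CNF is satisfiable iff it is propositionally true. -/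
def qbfSat : QPrefix → Cnf → Prop
  | [], ψ => ∃ σ : Var → Bool, cnfSat σ ψ
  | (Quant.ex, x) :: pre, ψ =>
      qbfSat pre (Cnf.restrict ψ {(x, true)}) ∨ qbfSat pre (Cnf.restrict ψ {(x, false)})
  | (Quant.all, x) :: pre, ψ =>
      qbfSat pre (Cnf.restrict ψ {(x, true)}) ∧ qbfSat pre (Cnf.restrict ψ {(x, false)})

/-- Restriction of a set of cubes (disjunctively added to the matrix) by an
assignment: remove falsified cubes and delete satisfied literals. -/
def Cube.restrictSet (Ds : Finset Cube) (A : Assignment) : Finset Cube :=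
  (Ds.filter (fun D => ∀ l ∈ D, Lit.negate l ∉ A)).image (fun D => D.filter (fun l => l ∉ A))

/-- Satisfiability of the QBF `pre.(ψ ∨ D₁ ∨ … ∨ Dₙ)` whose matrix is a CNF
together with disjunctively added cubes. -/
def qbfSatCubes : QPrefix → Cnf → Finset Cube → Prop
  | [], ψ, Ds => ∃ σ : Var → Bool, cnfSat σ ψ ∨ ∃ D ∈ Ds, cubeSat σ D
  | (Quant.ex, x) :: pre, ψ, Ds =>
      qbfSatCubes pre (Cnf.restrict ψ {(x, true)}) (Cube.restrictSet Ds {(x, true)}) ∨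
      qbfSatCubes pre (Cnf.restrict ψ {(x, false)}) (Cube.restrictSet Ds {(x, false)})
  | (Quant.all, x) :: pre, ψ, Ds =>
      qbfSatCubes pre (Cnf.restrict ψ {(x, true)}) (Cube.restrictSet Ds {(x, true)}) ∧
      qbfSatCubes pre (Cnf.restrict ψ {(x, false)}) (Cube.restrictSet Ds {(x, false)})

/-- Literal `l` is unit in the PCNF: the clause `(l)` occurs in the matrix
and the variable of `l` is existential. -/
def isUnit (pre : QPrefix) (ψ : Cnf) (l : Lit) : Prop :=
  ({l} : Clause) ∈ ψ ∧ (Quant.ex, l.1) ∈ pre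

/-- Literal `l` occurs in the CNF. -/
def occurs (ψ : Cnf) (l : Lit) : Prop := ∃ C ∈ ψ, l ∈ C

/-- Literal `l` is pure: it occurs but its negation does not. -/
def isPure (ψ : Cnf) (l : Lit) : Prop := occurs ψ l ∧ ¬ occurs ψ (Lit.negate l)

/-- Literals obtained by iterated unit/pure literal detection (QBCP), starting
from the decision assignment `A0`.  A pure existential literal is assigned
positively, a pure universal literal negatively; a unit existential literal is
assigned positively. -/
inductive PropChain (pre : QPrefix) (ψ : Cnf) (A0 : Assignment) : List Lit → Prop
  | nil : PropChain pre ψ A0 []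
  | unit {ls : List Lit} {l : Lit} (h : PropChain pre ψ A0 ls)
      (hu : isUnit pre (Cnf.restrict ψ (A0 ∪ ls.toFinset)) l) :
      PropChain pre ψ A0 (l :: ls)
  | pureEx {ls : List Lit} {l : Lit} (h : PropChain pre ψ A0 ls)
      (hp : isPure (Cnf.restrict ψ (A0 ∪ ls.toFinset)) l)
      (he : (Quant.ex, l.1) ∈ pre) :
      PropChain pre ψ A0 (l :: ls)
  | pureAll {ls : List Lit} {l : Lit} (h : PropChain pre ψ A0 ls)
      (hp : isPure (Cnf.restrict ψ (A0 ∪ ls.toFinset)) l)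
      (ha : (Quant.all, l.1) ∈ pre) :
      PropChain pre ψ A0 (Lit.negate l :: ls)

/-- A QCDCL assignment: a consistent assignment `A = A' ∪ A''` where the
decision literals `A'` assign exactly the variables of an initial segment of
the prefix and `A''` is obtained by unit/pure literal detection (QBCP). -/
def QCDCLAssignment (pre : QPrefix) (ψ : Cnf) (A : Assignment) : Prop :=
  Assignment.consistent A ∧
  ∃ (A0 : Assignment) (ls : List Lit) (k : ℕ),
    A = A0 ∪ ls.toFinset ∧
    A0.image Prod.fst = ((pre.take k).map Prod.snd).toFinset ∧
    PropChain pre ψ A0 ls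

/-! ### Auxiliary lemmas -/

lemma Lit.negate_negate (l : Lit) : l.negate.negate = l := by
  simp [Lit.negate]

lemma Lit.negate_inj {l m : Lit} (h : Lit.negate l = Lit.negate m) : l = m := by
  have := congrArg Lit.negate h
  rwa [Lit.negate_negate, Lit.negate_negate] at this

lemma lit_eq_or_negate {l m : Lit} (h : l.1 = m.1) : l = m ∨ l = Lit.negate m := by
  rcases l with ⟨v, bl⟩; rcases m with ⟨w, bm⟩
  simp only at h; subst h
  cases bl <;> cases bm <;> simp [Lit.negate]

lemma mem_restrict {ψ : Cnf} {A : Assignment} {D : Clause} :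
    D ∈ Cnf.restrict ψ A ↔ ∃ C, (C ∈ ψ ∧ ∀ l ∈ A, l ∉ C) ∧ Clause.restrict C A = D := by
  simp [Cnf.restrict, Finset.mem_image, Finset.mem_filter]

lemma clause_restrict_subset (C : Clause) (A : Assignment) : Clause.restrict C A ⊆ C :=
  Finset.filter_subset _ _

lemma mem_clause_restrict {C : Clause} {A : Assignment} {l : Lit} :
    l ∈ Clause.restrict C A ↔ l ∈ C ∧ Lit.negate l ∉ A := by
  simp [Clause.restrict]

lemma clause_restrict_restrict (C : Clause) (A B : Assignment) :
    Clause.restrict (Clause.restrict C B) A = Clause.restrict C (A ∪ B) := by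
  ext l; simp [Clause.restrict, Finset.mem_filter]; tauto

lemma cnf_restrict_restrict {ψ : Cnf} {A B : Assignment}
    (h : ∀ l ∈ A, Lit.negate l ∉ B) :
    Cnf.restrict (Cnf.restrict ψ B) A = Cnf.restrict ψ (A ∪ B) := by
  ext D
  simp only [mem_restrict]
  constructor
  · rintro ⟨D', ⟨⟨C, ⟨hC, hCB⟩, rfl⟩, hDA⟩, rfl⟩
    refine ⟨C, ⟨hC, ?_⟩, (clause_restrict_restrict C A B).symm⟩
    intro l hl
    rcases Finset.mem_union.1 hl with hA | hB
    · intro hlC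
      exact hDA l hA (mem_clause_restrict.2 ⟨hlC, h l hA⟩)
    · exact hCB l hB
  · rintro ⟨C, ⟨hC, hCAB⟩, rfl⟩
    refine ⟨Clause.restrict C B, ⟨⟨C, ⟨hC, fun l hl => hCAB l (Finset.mem_union_right _ hl)⟩, rfl⟩, ?_⟩,
      clause_restrict_restrict C A B⟩
    intro l hl hl'
    exact hCAB l (Finset.mem_union_left _ hl) (clause_restrict_subset _ _ hl')

lemma mem_restrictSet {Ds : Finset Cube} {A : Assignment} {E : Cube} :
    E ∈ Cube.restrictSet Ds A ↔
      ∃ D, (D ∈ Ds ∧ ∀ l ∈ D, Lit.negate l ∉ A) ∧ D.filter (fun l => l ∉ A) = E := by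
  simp [Cube.restrictSet, Finset.mem_image, Finset.mem_filter]

lemma cube_restrictSet_restrictSet {Ds : Finset Cube} {A B : Assignment}
    (h : ∀ l ∈ B, Lit.negate l ∉ A) :
    Cube.restrictSet (Cube.restrictSet Ds B) A = Cube.restrictSet Ds (A ∪ B) := by
  ext E
  simp only [mem_restrictSet]
  constructor
  · rintro ⟨D', ⟨⟨D, ⟨hD, hDB⟩, rfl⟩, hDA⟩, rfl⟩
    refine ⟨D, ⟨hD, ?_⟩, ?_⟩
    · intro l hl
      rw [Finset.mem_union, not_or]
      refine ⟨?_, hDB l hl⟩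
      by_cases hlB : l ∈ B
      · exact h l hlB
      · exact hDA l (Finset.mem_filter.2 ⟨hl, hlB⟩)
    · rw [Finset.filter_filter]
      apply Finset.filter_congr; intro l _
      simp [Finset.mem_union]; tauto
  · rintro ⟨D, ⟨hD, hDAB⟩, rfl⟩
    refine ⟨D.filter (fun l => l ∉ B), ⟨⟨D, ⟨hD, fun l hl => by
      have := hDAB l hl; rw [Finset.mem_union, not_or] at this; exact this.2⟩, rfl⟩,
      fun l hl => by
        have := hDAB l (Finset.mem_filter.1 hl).1
        rw [Finset.mem_union, not_or] at this; exact this.1⟩, ?_⟩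
    rw [Finset.filter_filter]
    apply Finset.filter_congr; intro l _
    simp [Finset.mem_union]; tauto

lemma pre_restrict_restrict (pre : QPrefix) (A B : Assignment) :
    QPrefix.restrict (QPrefix.restrict pre B) A = QPrefix.restrict pre (A ∪ B) := by
  simp only [QPrefix.restrict, List.filter_filter]
  apply List.filter_congr
  intro q _
  simp [Finset.image_union]

lemma cnf_restrict_empty (ψ : Cnf) : Cnf.restrict ψ ∅ = ψ := by
  ext D; simp [mem_restrict, Clause.restrict]

lemma pre_restrict_empty (pre : QPrefix) : QPrefix.restrict pre ∅ = pre := by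
  simp [QPrefix.restrict]

lemma cube_restrictSet_emptyset (A : Assignment) : Cube.restrictSet ∅ A = ∅ := by
  simp [Cube.restrictSet]

lemma qbfSat_toCubes : ∀ (pre : QPrefix) (ψ : Cnf) (Ds : Finset Cube),
    qbfSat pre ψ → qbfSatCubes pre ψ Ds := by
  intro pre
  induction pre with
  | nil =>
    rintro ψ Ds ⟨σ, hσ⟩
    exact ⟨σ, Or.inl hσ⟩
  | cons hd tl ih =>
    rintro ψ Ds h
    obtain ⟨q, x⟩ := hd
    cases q with
    | ex =>
      simp only [qbfSat, qbfSatCubes] at h ⊢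
      rcases h with h | h
      · exact Or.inl (ih _ _ h)
      · exact Or.inr (ih _ _ h)
    | all =>
      simp only [qbfSat, qbfSatCubes] at h ⊢
      exact ⟨ih _ _ h.1, ih _ _ h.2⟩

lemma qbfSatCubes_empty : ∀ (pre : QPrefix) (ψ : Cnf),
    qbfSatCubes pre ψ ∅ ↔ qbfSat pre ψ := by
  intro pre
  induction pre with
  | nil => intro ψ; simp [qbfSat, qbfSatCubes]
  | cons hd tl ih =>
    intro ψ
    obtain ⟨q, x⟩ := hd
    cases q <;>
      simp only [qbfSat, qbfSatCubes, cube_restrictSet_emptyset, ih]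

lemma cnf_restrict_mono {ψ₁ ψ₂ : Cnf} (h : ψ₁ ⊆ ψ₂) (A : Assignment) :
    Cnf.restrict ψ₁ A ⊆ Cnf.restrict ψ₂ A := by
  intro D hD
  rw [mem_restrict] at hD ⊢
  obtain ⟨C, ⟨hC, hCA⟩, rfl⟩ := hD
  exact ⟨C, ⟨h hC, hCA⟩, rfl⟩

lemma qbfSat_mono : ∀ (pre : QPrefix) (ψ₁ ψ₂ : Cnf), ψ₁ ⊆ ψ₂ →
    qbfSat pre ψ₂ → qbfSat pre ψ₁ := by
  intro pre
  induction pre with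
  | nil =>
    rintro ψ₁ ψ₂ h ⟨σ, hσ⟩
    exact ⟨σ, fun C hC => hσ C (h hC)⟩
  | cons hd tl ih =>
    rintro ψ₁ ψ₂ h hs
    obtain ⟨q, x⟩ := hd
    cases q with
    | ex =>
      simp only [qbfSat] at hs ⊢
      rcases hs with hs | hs
      · exact Or.inl (ih _ _ (cnf_restrict_mono h _) hs)
      · exact Or.inr (ih _ _ (cnf_restrict_mono h _) hs)
    | all =>
      simp only [qbfSat] at hs ⊢
      exact ⟨ih _ _ (cnf_restrict_mono h _) hs.1, ih _ _ (cnf_restrict_mono h _) hs.2⟩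

lemma empty_mem_restrict {ψ : Cnf} (h : (∅ : Clause) ∈ ψ) (A : Assignment) :
    (∅ : Clause) ∈ Cnf.restrict ψ A := by
  rw [mem_restrict]
  exact ⟨∅, ⟨h, by simp⟩, by simp [Clause.restrict]⟩

lemma not_qbfSat_of_empty_mem : ∀ (pre : QPrefix) (ψ : Cnf),
    (∅ : Clause) ∈ ψ → ¬ qbfSat pre ψ := by
  intro pre
  induction pre with
  | nil =>
    rintro ψ h ⟨σ, hσ⟩
    have := hσ ∅ h
    simp [clauseSat] at this
  | cons hd tl ih =>
    rintro ψ h hs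
    obtain ⟨q, x⟩ := hd
    cases q with
    | ex =>
      simp only [qbfSat] at hs
      rcases hs with hs | hs <;> exact ih _ (empty_mem_restrict h _) hs
    | all =>
      simp only [qbfSat] at hs
      exact ih _ (empty_mem_restrict h _) hs.1

lemma occurs_restrict {ψ : Cnf} {B : Assignment} {m : Lit}
    (h : occurs (Cnf.restrict ψ B) m) : occurs ψ m := by
  obtain ⟨D, hD, hm⟩ := h
  rw [mem_restrict] at hD
  obtain ⟨C, ⟨hC, _⟩, rfl⟩ := hD
  exact ⟨C, hC, clause_restrict_subset _ _ hm⟩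

lemma occurs_restrict_not_mem {ψ : Cnf} {B : Assignment} {l : Lit}
    (h : occurs (Cnf.restrict ψ B) l) : l ∉ B ∧ Lit.negate l ∉ B := by
  obtain ⟨D, hD, hl⟩ := h
  rw [mem_restrict] at hD
  obtain ⟨C, ⟨hC, hCB⟩, rfl⟩ := hD
  rw [mem_clause_restrict] at hl
  exact ⟨fun hlB => hCB l hlB hl.1, hl.2⟩

lemma var_ne_of_occurs_restrict {ψ : Cnf} {B : Assignment} {l a : Lit}
    (h : occurs (Cnf.restrict ψ B) l) (ha : a ∈ B) : l.1 ≠ a.1 := by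
  intro he
  obtain ⟨h1, h2⟩ := occurs_restrict_not_mem h
  rcases lit_eq_or_negate he with rfl | rfl
  · exact h1 ha
  · exact h2 (by rwa [Lit.negate_negate])

/-- A literal is forced: unit existential, pure existential, or the negation
of a pure universal literal. -/
def Forced (pre : QPrefix) (ψ : Cnf) (b : Lit) : Prop :=
  isUnit pre ψ b ∨ (isPure ψ b ∧ (Quant.ex, b.1) ∈ pre) ∨
    (isPure ψ (Lit.negate b) ∧ (Quant.all, b.1) ∈ pre)

/-- Weakened forcing condition, stable under restrictions on other variables. -/
def ForceCond (pre : QPrefix) (ψ : Cnf) (b : Lit) : Prop :=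
  ((({b} : Clause) ∈ ψ ∨ ¬ occurs ψ (Lit.negate b)) ∧ (Quant.ex, b.1) ∈ pre) ∨
  (¬ occurs ψ b ∧ (Quant.all, b.1) ∈ pre)

lemma Forced.toForceCond {pre : QPrefix} {ψ : Cnf} {b : Lit}
    (h : Forced pre ψ b) : ForceCond pre ψ b := by
  rcases h with ⟨h1, h2⟩ | ⟨⟨_, h1⟩, h2⟩ | ⟨⟨_, h1⟩, h2⟩
  · exact Or.inl ⟨Or.inl h1, h2⟩
  · exact Or.inl ⟨Or.inr h1, h2⟩
  · rw [Lit.negate_negate] at h1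
    exact Or.inr ⟨h1, h2⟩

lemma Forced.occursVar {pre : QPrefix} {ψ : Cnf} {b : Lit} (h : Forced pre ψ b) :
    occurs ψ b ∨ occurs ψ (Lit.negate b) := by
  rcases h with ⟨h1, _⟩ | ⟨⟨h1, _⟩, _⟩ | ⟨⟨h1, _⟩, _⟩
  · exact Or.inl ⟨{b}, h1, Finset.mem_singleton_self b⟩
  · exact Or.inl h1
  · exact Or.inr h1

lemma ForceCond.memPre {pre : QPrefix} {ψ : Cnf} {b : Lit} (h : ForceCond pre ψ b) :
    ∃ q, (q, b.1) ∈ pre := by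
  rcases h with ⟨_, h2⟩ | ⟨_, h2⟩
  · exact ⟨_, h2⟩
  · exact ⟨_, h2⟩

lemma singleton_mem_restrict {ψ : Cnf} {b : Lit} {x : Var} {t : Bool}
    (h : ({b} : Clause) ∈ ψ) (hne : b.1 ≠ x) :
    ({b} : Clause) ∈ Cnf.restrict ψ {(x, t)} := by
  rw [mem_restrict]
  refine ⟨{b}, ⟨h, ?_⟩, ?_⟩
  · intro l hl
    rw [Finset.mem_singleton] at hl
    subst hl
    rw [Finset.mem_singleton]
    intro hc
    exact hne (congrArg Prod.fst hc.symm)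
  · ext l
    rw [mem_clause_restrict]
    simp only [Finset.mem_singleton]
    constructor
    · rintro ⟨rfl, _⟩; rfl
    · rintro rfl
      refine ⟨rfl, fun hc => ?_⟩
      exact hne (by simpa [Lit.negate] using congrArg Prod.fst hc)

lemma forceCond_restrict {q₀ : Quant} {x : Var} {pre' : QPrefix} {ψ : Cnf} {b : Lit}
    (h : ForceCond ((q₀, x) :: pre') ψ b) (hne : b.1 ≠ x) (t : Bool) :
    ForceCond pre' (Cnf.restrict ψ {(x, t)}) b := by
  have hmem : ∀ q : Quant, (q, b.1) ∈ (q₀, x) :: pre' → (q, b.1) ∈ pre' := by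
    intro q hq
    rcases List.mem_cons.1 hq with heq | h'
    · exact absurd (congrArg Prod.snd heq) hne
    · exact h'
  rcases h with ⟨h1, h2⟩ | ⟨h1, h2⟩
  · refine Or.inl ⟨?_, hmem _ h2⟩
    rcases h1 with h1 | h1
    · exact Or.inl (singleton_mem_restrict h1 hne)
    · exact Or.inr (fun hc => h1 (occurs_restrict hc))
  · exact Or.inr ⟨fun hc => h1 (occurs_restrict hc), hmem _ h2⟩

lemma head_quant {Q q : Quant} {x : Var} {pre' : QPrefix}
    (hnd : ((((Q, x) :: pre').map Prod.snd)).Nodup)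
    (h : (q, x) ∈ (Q, x) :: pre') : q = Q := by
  rcases List.mem_cons.1 h with heq | h'
  · exact congrArg Prod.fst heq
  · exfalso
    simp only [List.map_cons, List.nodup_cons] at hnd
    exact hnd.1 (List.mem_map.2 ⟨(q, x), h', rfl⟩)

lemma restrict_self_of_not_mem {pre : QPrefix} {b : Lit}
    (h : b.1 ∉ pre.map Prod.snd) : QPrefix.restrict pre {b} = pre := by
  rw [QPrefix.restrict, List.filter_eq_self]
  intro q hq
  simp only [Finset.image_singleton, Finset.mem_singleton, decide_eq_true_eq]
  intro hc
  exact h (List.mem_map.2 ⟨q, hq, hc⟩)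

lemma clause_restrict_eq_self {C : Clause} {b : Lit} (h : Lit.negate b ∉ C) :
    Clause.restrict C {b} = C := by
  ext l
  rw [mem_clause_restrict]
  simp only [Finset.mem_singleton]
  constructor
  · exact fun hl => hl.1
  · intro hl
    refine ⟨hl, fun hc => ?_⟩
    have : l = Lit.negate b := by
      have := congrArg Lit.negate hc
      rwa [Lit.negate_negate] at this
    exact h (this ▸ hl)

lemma sub_restrict {ψ : Cnf} {b : Lit} (h : ¬ occurs ψ (Lit.negate b)) :
    Cnf.restrict ψ {b} ⊆ Cnf.restrict ψ {Lit.negate b} := by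
  intro D hD
  rw [mem_restrict] at hD ⊢
  obtain ⟨C, ⟨hC, hbC⟩, rfl⟩ := hD
  have hnb : Lit.negate b ∉ C := fun hc => h ⟨C, hC, hc⟩
  have hCr : Clause.restrict C {b} = C := clause_restrict_eq_self hnb
  refine ⟨C, ⟨hC, ?_⟩, ?_⟩
  · intro l hl
    rw [Finset.mem_singleton] at hl
    subst hl; exact hnb
  · rw [hCr]
    ext l
    rw [mem_clause_restrict]
    simp only [Finset.mem_singleton]
    constructor
    · exact fun hl => hl.1
    · intro hl
      refine ⟨hl, fun hc => ?_⟩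
      exact hbC l (Finset.mem_singleton.2 (Lit.negate_inj hc)) hl

lemma propChain_cons_inv {pre : QPrefix} {ψ : Cnf} {A0 : Assignment} {l : Lit} {ls : List Lit}
    (h : PropChain pre ψ A0 (l :: ls)) :
    PropChain pre ψ A0 ls ∧ Forced pre (Cnf.restrict ψ (A0 ∪ ls.toFinset)) l := by
  cases h with
  | unit h hu => exact ⟨h, Or.inl hu⟩
  | pureEx h hp he => exact ⟨h, Or.inr (Or.inl ⟨hp, he⟩)⟩
  | pureAll h hp ha =>
    refine ⟨h, Or.inr (Or.inr ⟨by rwa [Lit.negate_negate], by simpa [Lit.negate] using ha⟩)⟩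

lemma propChain_cons_of_forced {pre : QPrefix} {ψ : Cnf} {A0 : Assignment} {l : Lit} {ls : List Lit}
    (h : PropChain pre ψ A0 ls)
    (hf : Forced pre (Cnf.restrict ψ (A0 ∪ ls.toFinset)) l) :
    PropChain pre ψ A0 (l :: ls) := by
  rcases hf with hu | ⟨hp, he⟩ | ⟨hp, ha⟩
  · exact .unit h hu
  · exact .pureEx h hp he
  · have := PropChain.pureAll h hp (by simpa [Lit.negate] using ha)
    rwa [Lit.negate_negate] at this

lemma forced_var_ne {pre : QPrefix} {ψ : Cnf} {S : Assignment} {l a : Lit}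
    (hf : Forced pre (Cnf.restrict ψ S) l) (ha : a ∈ S) : l.1 ≠ a.1 := by
  rcases hf.occursVar with h | h
  · exact var_ne_of_occurs_restrict h ha
  · have := var_ne_of_occurs_restrict h ha
    simpa [Lit.negate] using this

lemma mem_restrict_pre {pre : QPrefix} {q : Quant} {v : Var} {a : Lit}
    (h : (q, v) ∈ pre) (hne : v ≠ a.1) : (q, v) ∈ QPrefix.restrict pre {a} :=
  List.mem_filter.2 ⟨h, by simp [hne]⟩

lemma chain_var_ne {pre : QPrefix} {ψ : Cnf} {A0 : Assignment} {a : Lit} (ha : a ∈ A0) :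
    ∀ {ls}, PropChain pre ψ A0 ls → ∀ m ∈ ls, m.1 ≠ a.1 := by
  intro ls
  induction ls with
  | nil => intro _ m hm; simp at hm
  | cons l ls ih =>
    intro h m hm
    obtain ⟨h', hf⟩ := propChain_cons_inv h
    rcases List.mem_cons.1 hm with rfl | hm'
    · exact forced_var_ne hf (Finset.mem_union_left _ ha)
    · exact ih h' m hm'

lemma chain_shift {pre : QPrefix} {ψ : Cnf} {a : Lit} {A0 : Assignment}
    (hna : Lit.negate a ∉ A0) :
    ∀ ls, PropChain pre ψ (insert a A0) ls → (∀ m ∈ ls, m ≠ Lit.negate a) →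
      PropChain (QPrefix.restrict pre {a}) (Cnf.restrict ψ {a}) A0 ls := by
  intro ls
  induction ls with
  | nil => intro _ _; exact .nil
  | cons l ls ih =>
    intro h hm
    obtain ⟨h', hf⟩ := propChain_cons_inv h
    have htail := ih h' (fun m hm' => hm m (List.mem_cons_of_mem _ hm'))
    have hkey : Cnf.restrict (Cnf.restrict ψ {a}) (A0 ∪ ls.toFinset)
        = Cnf.restrict ψ (insert a A0 ∪ ls.toFinset) := by
      rw [cnf_restrict_restrict ?cond]
      · congr 1
        ext m; simp [Finset.mem_insert]
      case cond =>
        intro m hmem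
        rw [Finset.mem_singleton]
        intro hc
        have hmn : m = Lit.negate a := by
          have := congrArg Lit.negate hc; rwa [Lit.negate_negate] at this
        subst hmn
        rcases Finset.mem_union.1 hmem with h1 | h1
        · exact hna h1
        · exact hm _ (List.mem_cons_of_mem _ (List.mem_toFinset.1 h1)) rfl
    have hvne : l.1 ≠ a.1 :=
      forced_var_ne hf (Finset.mem_union_left _ (Finset.mem_insert_self a A0))
    apply propChain_cons_of_forced htail
    rw [hkey]
    rcases hf with ⟨h1, h2⟩ | ⟨h1, h2⟩ | ⟨h1, h2⟩
    · exact Or.inl ⟨h1, mem_restrict_pre h2 hvne⟩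
    · exact Or.inr (Or.inl ⟨h1, mem_restrict_pre h2 hvne⟩)
    · exact Or.inr (Or.inr ⟨h1, mem_restrict_pre h2 hvne⟩)

lemma chain_split {pre : QPrefix} {ψ : Cnf} {A0 : Assignment} {b : Lit} :
    ∀ {ls₁}, PropChain pre ψ A0 (ls₁ ++ [b]) →
      Forced pre (Cnf.restrict ψ A0) b ∧ PropChain pre ψ (insert b A0) ls₁ := by
  intro ls₁
  induction ls₁ with
  | nil =>
    intro h
    obtain ⟨_, hf⟩ := propChain_cons_inv h
    exact ⟨by simpa using hf, .nil⟩
  | cons l ls₁ ih =>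
    intro h
    obtain ⟨h', hf⟩ := propChain_cons_inv h
    obtain ⟨hb, hchain⟩ := ih h'
    refine ⟨hb, propChain_cons_of_forced hchain ?_⟩
    have hset : A0 ∪ (ls₁ ++ [b]).toFinset = insert b A0 ∪ ls₁.toFinset := by
      ext m; simp [List.toFinset_append, Finset.mem_insert]
    rw [← hset]; exact hf

lemma negate_ne_self (b : Lit) : Lit.negate b ≠ b := by
  rcases b with ⟨v, t⟩
  simp [Lit.negate]

lemma cube_kill {Ds : Finset Cube} {b : Lit} (h : ∀ D ∈ Ds, b ∈ D) :
    Cube.restrictSet Ds {Lit.negate b} = ∅ := by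
  ext E
  simp only [mem_restrictSet, Finset.notMem_empty, iff_false]
  rintro ⟨D, ⟨hD, hc⟩, _⟩
  exact hc b (h D hD) (by rw [Finset.mem_singleton])

lemma cube_single {A : Assignment} {b : Lit} (hcons : Assignment.consistent A) (hb : b ∈ A) :
    Cube.restrictSet {A} {b} = {A.erase b} := by
  ext E
  simp only [mem_restrictSet, Finset.mem_singleton]
  constructor
  · rintro ⟨D, ⟨rfl, _⟩, rfl⟩
    ext l
    simp only [Finset.mem_filter, Finset.mem_erase]
    tauto
  · rintro rfl
    refine ⟨A, ⟨rfl, ?_⟩, ?_⟩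
    · intro l hl hc
      have hlb : l = Lit.negate b := by
        have := congrArg Lit.negate hc; rwa [Lit.negate_negate] at this
      subst hlb
      exact hcons b hb hl
    · ext l
      simp only [Finset.mem_filter, Finset.mem_erase]
      tauto

lemma empty_mem_of_unit {ψ : Cnf} {b : Lit} (h : ({b} : Clause) ∈ ψ) :
    (∅ : Clause) ∈ Cnf.restrict ψ {Lit.negate b} := by
  rw [mem_restrict]
  refine ⟨{b}, ⟨h, ?_⟩, ?_⟩
  · intro l hl
    rw [Finset.mem_singleton] at hl
    subst hl
    rw [Finset.mem_singleton]
    exact negate_ne_self b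
  · ext l
    rw [mem_clause_restrict]
    simp only [Finset.mem_singleton, Finset.notMem_empty, iff_false]
    rintro ⟨rfl, hc⟩
    exact hc rfl

lemma negate_singleton_notmem₁ {b : Lit} {x : Var} {t : Bool} (hx : b.1 ≠ x) :
    ∀ l ∈ ({(x, t)} : Assignment), Lit.negate l ∉ ({b} : Assignment) := by
  intro l hl
  rw [Finset.mem_singleton] at hl
  subst hl
  rw [Finset.mem_singleton]
  intro hc
  exact hx (congrArg Prod.fst hc).symm

lemma negate_singleton_notmem₂ {b : Lit} {x : Var} {t : Bool} (hx : b.1 ≠ x) :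
    ∀ l ∈ ({b} : Assignment), Lit.negate l ∉ ({(x, t)} : Assignment) := by
  intro l hl
  rw [Finset.mem_singleton] at hl
  subst hl
  rw [Finset.mem_singleton]
  intro hc
  exact hx (congrArg Prod.fst hc)

lemma cnf_restrict_comm {ψ : Cnf} {b : Lit} {x : Var} {t : Bool} (hx : b.1 ≠ x) :
    Cnf.restrict (Cnf.restrict ψ {b}) {(x, t)} = Cnf.restrict (Cnf.restrict ψ {(x, t)}) {b} := by
  rw [cnf_restrict_restrict (negate_singleton_notmem₁ hx),
    cnf_restrict_restrict (negate_singleton_notmem₂ hx), Finset.union_comm]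

lemma cube_restrict_comm {Ds : Finset Cube} {b : Lit} {x : Var} {t : Bool} (hx : b.1 ≠ x) :
    Cube.restrictSet (Cube.restrictSet Ds {b}) {(x, t)}
      = Cube.restrictSet (Cube.restrictSet Ds {(x, t)}) {b} := by
  rw [cube_restrictSet_restrictSet (negate_singleton_notmem₂ hx),
    cube_restrictSet_restrictSet (negate_singleton_notmem₁ hx), Finset.union_comm]

lemma cube_mem_transfer {Ds : Finset Cube} {b : Lit} {x : Var} {t : Bool}
    (h : ∀ D ∈ Ds, b ∈ D) (hx : b.1 ≠ x) :
    ∀ D' ∈ Cube.restrictSet Ds {(x, t)}, b ∈ D' := by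
  intro D' hD'
  rw [mem_restrictSet] at hD'
  obtain ⟨D, ⟨hD, _⟩, rfl⟩ := hD'
  rw [Finset.mem_filter]
  refine ⟨h D hD, ?_⟩
  rw [Finset.mem_singleton]
  intro hc
  exact hx (congrArg Prod.fst hc)

lemma prefix_restrict_cons_drop {q : Quant} {b : Lit} {tl : QPrefix}
    (hnd : (((q, b.1) :: tl).map Prod.snd).Nodup) :
    QPrefix.restrict ((q, b.1) :: tl) {b} = tl := by
  have hx1 : b.1 ∉ tl.map Prod.snd := by
    simp only [List.map_cons, List.nodup_cons] at hnd
    exact hnd.1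
  rw [QPrefix.restrict, List.filter_cons_of_neg (by simp)]
  exact restrict_self_of_not_mem hx1

lemma prefix_restrict_cons_keep {q : Quant} {x : Var} {b : Lit} {tl : QPrefix}
    (hx : b.1 ≠ x) :
    QPrefix.restrict ((q, x) :: tl) {b} = (q, x) :: QPrefix.restrict tl {b} := by
  rw [QPrefix.restrict, List.filter_cons_of_pos (by simpa using Ne.symm hx)]
  rfl

lemma semF {b : Lit} : ∀ (pre : QPrefix) (ψ : Cnf) (Ds : Finset Cube),
    (pre.map Prod.snd).Nodup → ForceCond pre ψ b → (∀ D ∈ Ds, b ∈ D) →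
    qbfSatCubes pre ψ Ds →
    qbfSatCubes (QPrefix.restrict pre {b}) (Cnf.restrict ψ {b}) (Cube.restrictSet Ds {b}) := by
  intro pre
  induction pre with
  | nil =>
    intro ψ Ds _ hfc _ _
    rcases hfc with ⟨_, h2⟩ | ⟨_, h2⟩ <;> simp at h2
  | cons hd tl ih =>
    intro ψ Ds hnd hfc hbD hs
    obtain ⟨q, x⟩ := hd
    have hndtl : (tl.map Prod.snd).Nodup := by
      simp only [List.map_cons, List.nodup_cons] at hnd
      exact hnd.2
    by_cases hx : b.1 = x
    · subst hx
      rw [prefix_restrict_cons_drop hnd]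
      have heta : ((b.1, b.2) : Lit) = b := rfl
      rcases hfc with ⟨hcl, hmem⟩ | ⟨hocc, hmem⟩
      · -- existential forced literal
        have hq : Quant.ex = q := head_quant hnd hmem
        subst hq
        simp only [qbfSatCubes] at hs
        have hother : qbfSatCubes tl (Cnf.restrict ψ {Lit.negate b})
            (Cube.restrictSet Ds {Lit.negate b}) → qbfSatCubes tl (Cnf.restrict ψ {b})
            (Cube.restrictSet Ds {b}) := by
          intro h
          rw [cube_kill hbD, qbfSatCubes_empty] at h
          rcases hcl with hcl | hcl
          · exact absurd h (not_qbfSat_of_empty_mem _ _ (empty_mem_of_unit hcl))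
          · exact qbfSat_toCubes _ _ _ (qbfSat_mono _ _ _ (sub_restrict hcl) h)
        have hnegeta : ((b.1, !b.2) : Lit) = Lit.negate b := rfl
        cases hb2 : b.2 with
        | true =>
          rw [show ((b.1, true) : Lit) = b by rw [← hb2]] at hs
          rw [show ((b.1, false) : Lit) = Lit.negate b by rw [← hnegeta, hb2]; rfl] at hs
          rcases hs with h | h
          · exact h
          · exact hother h
        | false =>
          rw [show ((b.1, false) : Lit) = b by rw [← hb2]] at hs
          rw [show ((b.1, true) : Lit) = Lit.negate b by rw [← hnegeta, hb2]; rfl] at hs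
          rcases hs with h | h
          · exact hother h
          · exact h
      · -- universal forced literal
        have hq : Quant.all = q := head_quant hnd hmem
        subst hq
        simp only [qbfSatCubes] at hs
        cases hb2 : b.2 with
        | true =>
          rw [show ((b.1, true) : Lit) = b by rw [← hb2]] at hs
          exact hs.1
        | false =>
          rw [show ((b.1, false) : Lit) = b by rw [← hb2]] at hs
          exact hs.2
    · have hx' : b.1 ≠ x := hx
      rw [prefix_restrict_cons_keep hx']
      cases q with
      | ex =>
        simp only [qbfSatCubes] at hs ⊢
        rcases hs with h | h
        · left
          rw [cnf_restrict_comm hx', cube_restrict_comm hx']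
          exact ih _ _ hndtl (forceCond_restrict hfc hx' true) (cube_mem_transfer hbD hx') h
        · right
          rw [cnf_restrict_comm hx', cube_restrict_comm hx']
          exact ih _ _ hndtl (forceCond_restrict hfc hx' false) (cube_mem_transfer hbD hx') h
      | all =>
        simp only [qbfSatCubes] at hs ⊢
        constructor
        · rw [cnf_restrict_comm hx', cube_restrict_comm hx']
          exact ih _ _ hndtl (forceCond_restrict hfc hx' true) (cube_mem_transfer hbD hx') hs.1
        · rw [cnf_restrict_comm hx', cube_restrict_comm hx']
          exact ih _ _ hndtl (forceCond_restrict hfc hx' false) (cube_mem_transfer hbD hx') hs.2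

lemma semB {b : Lit} : ∀ (pre : QPrefix) (ψ : Cnf),
    (pre.map Prod.snd).Nodup → ForceCond pre ψ b →
    qbfSat (QPrefix.restrict pre {b}) (Cnf.restrict ψ {b}) → qbfSat pre ψ := by
  intro pre
  induction pre with
  | nil =>
    intro ψ _ hfc _
    rcases hfc with ⟨_, h2⟩ | ⟨_, h2⟩ <;> simp at h2
  | cons hd tl ih =>
    intro ψ hnd hfc hs
    obtain ⟨q, x⟩ := hd
    have hndtl : (tl.map Prod.snd).Nodup := by
      simp only [List.map_cons, List.nodup_cons] at hnd
      exact hnd.2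
    by_cases hx : b.1 = x
    · subst hx
      rw [prefix_restrict_cons_drop hnd] at hs
      rcases hfc with ⟨hcl, hmem⟩ | ⟨hocc, hmem⟩
      · have hq : Quant.ex = q := head_quant hnd hmem
        subst hq
        simp only [qbfSat]
        cases hb2 : b.2 with
        | true =>
          left
          rw [show ((b.1, true) : Lit) = b by rw [← hb2]]
          exact hs
        | false =>
          right
          rw [show ((b.1, false) : Lit) = b by rw [← hb2]]
          exact hs
      · have hq : Quant.all = q := head_quant hnd hmem
        subst hq
        simp only [qbfSat]
        have hother : qbfSat tl (Cnf.restrict ψ {Lit.negate b}) := by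
          apply qbfSat_mono _ _ _ _ hs
          have := sub_restrict (b := Lit.negate b) (by rwa [Lit.negate_negate])
          rwa [Lit.negate_negate] at this
        have hnegeta : ((b.1, !b.2) : Lit) = Lit.negate b := rfl
        cases hb2 : b.2 with
        | true =>
          rw [show ((b.1, true) : Lit) = b by rw [← hb2]]
          rw [show ((b.1, false) : Lit) = Lit.negate b by rw [← hnegeta, hb2]; rfl]
          exact ⟨hs, hother⟩
        | false =>
          rw [show ((b.1, false) : Lit) = b by rw [← hb2]]
          rw [show ((b.1, true) : Lit) = Lit.negate b by rw [← hnegeta, hb2]; rfl]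
          exact ⟨hother, hs⟩
    · have hx' : b.1 ≠ x := hx
      rw [prefix_restrict_cons_keep hx'] at hs
      cases q with
      | ex =>
        simp only [qbfSat] at hs ⊢
        rcases hs with h | h
        · left
          rw [cnf_restrict_comm hx'] at h
          exact ih _ hndtl (forceCond_restrict hfc hx' true) h
        · right
          rw [cnf_restrict_comm hx'] at h
          exact ih _ hndtl (forceCond_restrict hfc hx' false) h
      | all =>
        simp only [qbfSat] at hs ⊢
        constructor
        · have h := hs.1
          rw [cnf_restrict_comm hx'] at h
          exact ih _ hndtl (forceCond_restrict hfc hx' true) h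
        · have h := hs.2
          rw [cnf_restrict_comm hx'] at h
          exact ih _ hndtl (forceCond_restrict hfc hx' false) h

lemma consistent_mono {A B : Assignment} (h : A ⊆ B) (hc : B.consistent) :
    A.consistent := fun l hl hneg => hc l (h hl) (h hneg)

lemma erase_union_self {A : Assignment} {a : Lit} (h : a ∈ A) : A.erase a ∪ {a} = A := by
  ext m
  simp only [Finset.mem_union, Finset.mem_erase, Finset.mem_singleton]
  rcases eq_or_ne m a with rfl | hne
  · simp [h]
  · simp [hne]

lemma nodup_restrict_pre {pre : QPrefix} {B : Assignment}
    (h : (pre.map Prod.snd).Nodup) : ((QPrefix.restrict pre B).map Prod.snd).Nodup :=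
  ((List.filter_sublist (l := pre)).map Prod.snd).nodup h

lemma filter_length_lt {pre : QPrefix} {b : Lit} (h : ∃ q, (q, b.1) ∈ pre) :
    (QPrefix.restrict pre {b}).length < pre.length := by
  obtain ⟨q, hq⟩ := h
  rw [QPrefix.restrict, List.length_filter_lt_length_iff_exists]
  exact ⟨(q, b.1), hq, by simp⟩

lemma main_aux : ∀ (n : ℕ) (pre : QPrefix) (ψ : Cnf) (A : Assignment),
    pre.length = n → (pre.map Prod.snd).Nodup → QCDCLAssignment pre ψ A →
    qbfSat (QPrefix.restrict pre A) (Cnf.restrict ψ A) →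
    qbfSatCubes pre ψ {A} → qbfSat pre ψ := by
  intro n
  induction n using Nat.strong_induction_on with
  | _ n ih =>
  intro pre ψ A hlen hnd hQA hsat hcube
  obtain ⟨hcons, A0, ls, k, hA, hk, hchain⟩ := hQA
  by_cases hA0 : A0 = ∅
  · subst hA0
    rcases ls.eq_nil_or_concat with rfl | ⟨ls₁, lω, rfl⟩
    · -- trivial case : A = ∅
      have hAe : A = ∅ := by simpa using hA
      subst hAe
      rwa [pre_restrict_empty, cnf_restrict_empty] at hsat
    · -- propagation case : peel the oldest propagated literal
      rw [List.concat_eq_append] at hchain hA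
      obtain ⟨hF, hchain₁⟩ := chain_split hchain
      rw [cnf_restrict_empty] at hF
      have hFC := hF.toForceCond
      have hlωA : lω ∈ A := by
        rw [hA]
        simp [List.toFinset_append]
      have hnega : Lit.negate lω ∉ A := hcons lω hlωA
      have hmemvar : ∀ m ∈ ls₁, m.1 ≠ lω.1 :=
        chain_var_ne (Finset.mem_insert_self lω ∅) hchain₁
      have hmA : ∀ m ∈ ls₁, m ∈ A := by
        intro m hm
        rw [hA]
        simp only [Finset.empty_union, List.mem_toFinset, List.mem_append]
        exact Or.inl hm
      have hnotmem : lω ∉ ls₁.toFinset :=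
        fun hc => hmemvar lω (List.mem_toFinset.1 hc) rfl
      have hAe : A.erase lω = ls₁.toFinset := by
        rw [hA]
        ext m
        simp only [Finset.mem_erase, Finset.empty_union, List.mem_toFinset, List.mem_append,
          List.mem_singleton]
        constructor
        · rintro ⟨hne, hm | rfl⟩
          · exact hm
          · exact absurd rfl hne
        · intro hm
          exact ⟨fun heq => hmemvar m hm (by rw [heq]), Or.inl hm⟩
      have hchain₂ : PropChain (QPrefix.restrict pre {lω}) (Cnf.restrict ψ {lω}) ∅ ls₁ := by
        apply chain_shift (by simp) ls₁ hchain₁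
        intro m hm heq
        exact hnega (heq ▸ hmA m hm)
      have hcons' : Assignment.consistent (A.erase lω) :=
        consistent_mono (Finset.erase_subset _ _) hcons
      have hQ' : QCDCLAssignment (QPrefix.restrict pre {lω}) (Cnf.restrict ψ {lω})
          (A.erase lω) := ⟨hcons', ∅, ls₁, 0, by rw [hAe]; simp, by simp, hchain₂⟩
      have hcond : ∀ m ∈ A.erase lω, Lit.negate m ∉ ({lω} : Assignment) := by
        intro m hm hc
        rw [Finset.mem_singleton] at hc
        have hmn : m = Lit.negate lω := by
          have := congrArg Lit.negate hc; rwa [Lit.negate_negate] at this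
        exact hnega (hmn ▸ Finset.mem_of_mem_erase hm)
      have hsat' : qbfSat (QPrefix.restrict (QPrefix.restrict pre {lω}) (A.erase lω))
          (Cnf.restrict (Cnf.restrict ψ {lω}) (A.erase lω)) := by
        rw [pre_restrict_restrict, cnf_restrict_restrict hcond, erase_union_self hlωA]
        exact hsat
      have hcube' : qbfSatCubes (QPrefix.restrict pre {lω}) (Cnf.restrict ψ {lω})
          {A.erase lω} := by
        have := semF pre ψ {A} hnd hFC
          (by intro D hD; rw [Finset.mem_singleton] at hD; subst hD; exact hlωA) hcube
        rwa [cube_single hcons hlωA] at this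
      have hlt : (QPrefix.restrict pre {lω}).length < n := hlen ▸ filter_length_lt hFC.memPre
      have := ih _ hlt (QPrefix.restrict pre {lω}) _ _ rfl (nodup_restrict_pre hnd)
        hQ' hsat' hcube'
      exact semB pre ψ hnd hFC this
  · -- decision case : peel the outermost variable, which is decided
    cases pre with
    | nil =>
      have h0 : A0.image Prod.fst = ∅ := by simpa using hk
      exact absurd (Finset.image_eq_empty.1 h0) hA0
    | cons hd pre' =>
    obtain ⟨Q, x⟩ := hd
    obtain ⟨k', rfl⟩ : ∃ k', k = k' + 1 := by
      cases k with
      | zero =>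
        have h0 : A0.image Prod.fst = ∅ := by simpa using hk
        exact absurd (Finset.image_eq_empty.1 h0) hA0
      | succ k' => exact ⟨k', rfl⟩
    rw [List.take_succ_cons, List.map_cons, List.toFinset_cons] at hk
    have hxA0 : x ∈ A0.image Prod.fst := by rw [hk]; exact Finset.mem_insert_self _ _
    obtain ⟨a, haA0, hax⟩ := Finset.mem_image.1 hxA0
    subst hax
    have haA : a ∈ A := by rw [hA]; exact Finset.mem_union_left _ haA0
    have hnega : Lit.negate a ∉ A := hcons a haA
    have hvls : ∀ m ∈ ls, m.1 ≠ a.1 := chain_var_ne haA0 hchain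
    have hanotls : a ∉ ls.toFinset := fun hc => hvls a (List.mem_toFinset.1 hc) rfl
    have hndtl : (pre'.map Prod.snd).Nodup := by
      simp only [List.map_cons, List.nodup_cons] at hnd
      exact hnd.2
    have hxtl : a.1 ∉ pre'.map Prod.snd := by
      simp only [List.map_cons, List.nodup_cons] at hnd
      exact hnd.1
    have hA'dec : A.erase a = (A0.erase a) ∪ ls.toFinset := by
      rw [hA, Finset.erase_union_distrib, Finset.erase_eq_of_notMem hanotls]
    have huniqA0 : ∀ m ∈ A0, m.1 = a.1 → m = a := by
      intro m hm hmv
      rcases lit_eq_or_negate hmv with rfl | rfl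
      · rfl
      · exact absurd (by rw [hA]; exact Finset.mem_union_left _ hm) hnega
    have himg' : (A0.erase a).image Prod.fst = ((pre'.take k').map Prod.snd).toFinset := by
      have hx_not : a.1 ∉ ((pre'.take k').map Prod.snd).toFinset := by
        intro hc
        apply hxtl
        rw [List.mem_toFinset, List.map_take] at hc
        exact (List.take_sublist _ _).subset hc
      ext y
      simp only [Finset.mem_image]
      constructor
      · rintro ⟨m, hm, rfl⟩
        obtain ⟨hne, hmA0⟩ := Finset.mem_erase.1 hm
        have : m.1 ∈ A0.image Prod.fst := Finset.mem_image_of_mem _ hmA0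
        rw [hk, Finset.mem_insert] at this
        rcases this with heq | hT
        · exact absurd (huniqA0 m hmA0 heq) hne
        · exact hT
      · intro hy
        have : y ∈ A0.image Prod.fst := by rw [hk]; exact Finset.mem_insert_of_mem hy
        obtain ⟨m, hm, rfl⟩ := Finset.mem_image.1 this
        refine ⟨m, Finset.mem_erase.2 ⟨?_, hm⟩, rfl⟩
        rintro rfl
        exact hx_not hy
    have hchain' : PropChain pre' (Cnf.restrict ψ {a}) (A0.erase a) ls := by
      have h1 : PropChain (QPrefix.restrict ((Q, a.1) :: pre') {a}) (Cnf.restrict ψ {a})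
          (A0.erase a) ls := by
        apply chain_shift
          (fun hc => hnega (by rw [hA]; exact Finset.mem_union_left _ (Finset.mem_of_mem_erase hc)))
          ls ?_ ?_
        · rwa [Finset.insert_erase haA0]
        · intro m hm heq
          apply hnega
          rw [← heq, hA]
          exact Finset.mem_union_right _ (List.mem_toFinset.2 hm)
      rwa [prefix_restrict_cons_drop hnd] at h1
    have hQ' : QCDCLAssignment pre' (Cnf.restrict ψ {a}) (A.erase a) :=
      ⟨consistent_mono (Finset.erase_subset _ _) hcons, A0.erase a, ls, k', hA'dec, himg', hchain'⟩
    have hAins : A = insert a (A.erase a) := (Finset.insert_erase haA).symm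
    have hpre_eq : QPrefix.restrict ((Q, a.1) :: pre') A = QPrefix.restrict pre' (A.erase a) := by
      rw [QPrefix.restrict, List.filter_cons_of_neg
        (by have : a.1 ∈ A.image Prod.fst := Finset.mem_image_of_mem _ haA; simp [this])]
      apply List.filter_congr
      intro q hq
      rw [decide_eq_decide]
      have hqne : q.2 ≠ a.1 := by
        intro hc
        exact hxtl (hc ▸ List.mem_map.2 ⟨q, hq, rfl⟩)
      rw [hAins, Finset.image_insert]
      simp [hqne]
    have hcond2 : ∀ m ∈ A.erase a, Lit.negate m ∉ ({a} : Assignment) := by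
      intro m hm hc
      rw [Finset.mem_singleton] at hc
      have hmn : m = Lit.negate a := by
        have := congrArg Lit.negate hc; rwa [Lit.negate_negate] at this
      exact hnega (hmn ▸ Finset.mem_of_mem_erase hm)
    have hcnf_eq : Cnf.restrict ψ A = Cnf.restrict (Cnf.restrict ψ {a}) (A.erase a) := by
      rw [cnf_restrict_restrict hcond2, erase_union_self haA]
    rw [hpre_eq, hcnf_eq] at hsat
    have hcube_b : Cube.restrictSet {A} {a} = {A.erase a} := cube_single hcons haA
    have hcube_nb : Cube.restrictSet {A} {Lit.negate a} = ∅ :=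
      cube_kill (by intro D hD; rw [Finset.mem_singleton] at hD; subst hD; exact haA)
    have hIH : qbfSatCubes pre' (Cnf.restrict ψ {a}) {A.erase a} →
        qbfSat pre' (Cnf.restrict ψ {a}) := by
      intro hc
      exact ih pre'.length (by rw [← hlen]; simp) pre' _ _ rfl hndtl hQ' hsat hc
    have hnegeta : ((a.1, !a.2) : Lit) = Lit.negate a := rfl
    cases Q with
    | ex =>
      simp only [qbfSatCubes] at hcube
      simp only [qbfSat]
      cases ha2 : a.2 with
      | true =>
        rw [show ((a.1, true) : Lit) = a by rw [← ha2]] at hcube ⊢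
        rw [show ((a.1, false) : Lit) = Lit.negate a by rw [← hnegeta, ha2]; rfl] at hcube ⊢
        rcases hcube with h | h
        · left
          exact hIH (by rwa [hcube_b] at h)
        · right
          rwa [hcube_nb, qbfSatCubes_empty] at h
      | false =>
        rw [show ((a.1, false) : Lit) = a by rw [← ha2]] at hcube ⊢
        rw [show ((a.1, true) : Lit) = Lit.negate a by rw [← hnegeta, ha2]; rfl] at hcube ⊢
        rcases hcube with h | h
        · left
          rwa [hcube_nb, qbfSatCubes_empty] at h
        · right
          exact hIH (by rwa [hcube_b] at h)
    | all =>
      simp only [qbfSatCubes] at hcube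
      simp only [qbfSat]
      cases ha2 : a.2 with
      | true =>
        rw [show ((a.1, true) : Lit) = a by rw [← ha2]] at hcube ⊢
        rw [show ((a.1, false) : Lit) = Lit.negate a by rw [← hnegeta, ha2]; rfl] at hcube ⊢
        refine ⟨hIH (by rw [← hcube_b]; exact hcube.1), ?_⟩
        have h := hcube.2
        rwa [hcube_nb, qbfSatCubes_empty] at h
      | false =>
        rw [show ((a.1, false) : Lit) = a by rw [← ha2]] at hcube ⊢
        rw [show ((a.1, true) : Lit) = Lit.negate a by rw [← hnegeta, ha2]; rfl] at hcube ⊢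
        refine ⟨?_, hIH (by rw [← hcube_b]; exact hcube.2)⟩
        have h := hcube.1
        rwa [hcube_nb, qbfSatCubes_empty] at h

/-- Generalized model generation: if `A` is a QCDCL assignment and the QBF
`φ[A]` is satisfiable, then adding the cube `C = ⋀_{l ∈ A} l` disjunctively to
the matrix preserves satisfiability. -/
theorem generalized_model_generation
    (pre : QPrefix) (ψ : Cnf) (A : Assignment)
    (hnodup : (pre.map Prod.snd).Nodup)
    (hA : QCDCLAssignment pre ψ A)
    (hsat : qbfSat (QPrefix.restrict pre A) (Cnf.restrict ψ A)) :
    qbfSat pre ψ ↔ qbfSatCubes pre ψ {A} := by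
  constructor
  · exact fun h => qbfSat_toCubes _ _ _ h
  · exact fun h => main_aux pre.length pre ψ A rfl hnodup hA hsat h
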